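/- Let r(t) be a solution of the Kepler equation r'' = -r/|r|³ lying on the curve a x + b y + c √(x²+y²) = 1 with c > 0. Then its energy E = |r'|²/2 − 1/|r| equals (a² + b² − c²)/(2c) and its angular momentum satisfies M² = 1/c. -/

import Mathlib

lemma kepler_algebra (a b c X Y X' Y' R : ℝ) (hc : 0 < c) (hR : 0 < R)
    (hS : R^2 = X^2+Y^2)
    (e1 : a*X + b*Y + c*R = 1)
    (e2 : a*X' + b*Y' + c*((X*X'+Y*Y')/R) = 0)
    (e3 : a*(-X/R^3) + b*(-Y/R^3) + c*(((X'*X' + X*(-X/R^3) + (Y'*Y' + Y*(-Y/R^3)))*R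
        - (X*X'+Y*Y')*((X*X'+Y*Y')/R))/R^2) = 0) :
    ((X'^2+Y'^2)/2 - 1/R = (a^2+b^2-c^2)/(2*c)) ∧ (X*Y' - Y*X')^2 = 1/c := by
  have hR' : R ≠ 0 := hR.ne'
  have hc' : c ≠ 0 := hc.ne'
  have e2' : a*X'*R + b*Y'*R + c*(X*X'+Y*Y') = 0 := by
    field_simp at e2; linear_combination e2
  have e3'' : -(a*X)*R - b*Y*R + c*((X'^2+Y'^2)*R^3 - (X^2+Y^2) - (X*X'+Y*Y')^2*R) = 0 := by
    field_simp at e3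
    have hfac : R^8 * (-(a*X)*R - b*Y*R + c*((X'^2+Y'^2)*R^3 - (X^2+Y^2) - (X*X'+Y*Y')^2*R)) = 0 := by
      linear_combination R^8 * e3
    rcases mul_eq_zero.mp hfac with h | h
    · exact absurd h (pow_ne_zero 8 hR')
    · exact h
  have hMR : c*(X*Y'-Y*X')^2*R - R = 0 := by
    linear_combination e3'' + R*e1 - (c*(X'^2+Y'^2)*R + c)*hS
  have hM : c*(X*Y'-Y*X')^2 = 1 := by
    have hfac : (c*(X*Y'-Y*X')^2 - 1)*R = 0 := by linear_combination hMR
    rcases mul_eq_zero.mp hfac with h | h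
    · linarith
    · exact absurd h hR'
  have hA : a*(X*Y'-Y*X')*R = (a*X+b*Y)*Y'*R + c*(X*X'+Y*Y')*Y := by
    linear_combination (-Y)*e2'
  have hB : b*(X*Y'-Y*X')*R = -((a*X+b*Y)*X'*R + c*(X*X'+Y*Y')*X) := by
    linear_combination X*e2'
  have hAB : (a^2+b^2)*(X*Y'-Y*X')^2*R^2
      = ((a*X+b*Y)*Y'*R + c*(X*X'+Y*Y')*Y)^2 + ((a*X+b*Y)*X'*R + c*(X*X'+Y*Y')*X)^2 := by
    linear_combination (a*(X*Y'-Y*X')*R + ((a*X+b*Y)*Y'*R + c*(X*X'+Y*Y')*Y))*hA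
      + (b*(X*Y'-Y*X')*R - ((a*X+b*Y)*X'*R + c*(X*X'+Y*Y')*X))*hB
  have hkey : (a^2+b^2)*R^2 = c*(X*X'+Y*Y')^2 + (a*X+b*Y)^2 := by
    linear_combination c*hAB + ((a*X+b*Y)^2 - (a^2+b^2)*R^2)*hM
      + (c*(a*X+b*Y)^2*(X'^2+Y'^2) - c^3*(X*X'+Y*Y')^2)*hS
      + c*(X*X'+Y*Y')^2*((a*X+b*Y)+c*R+1)*e1
  have hE : R*((X'^2+Y'^2)*c*R - 2*c - (a^2+b^2)*R + c^2*R) = 0 := by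
    linear_combination hM + c*(X'^2+Y'^2)*hS - hkey - (1 - c*R + (a*X+b*Y))*e1
  have hE' : (X'^2+Y'^2)*c*R - 2*c - (a^2+b^2)*R + c^2*R = 0 := by
    rcases mul_eq_zero.mp hE with h | h
    · exact absurd h hR'
    · exact h
  constructor
  · field_simp
    linear_combination hE'
  · rw [eq_div_iff hc']; linear_combination hM

/-- A Kepler solution lying on the curve `a x + b y + c r = 1`
(c > 0) has energy `(a²+b²−c²)/(2c)` and angular momentum with `M² = 1/c`. -/
theorem kepler_energy_angular_momentum
    (x y x' y' x'' y'' : ℝ → ℝ) (a b c : ℝ) (hc : 0 < c)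
    (hx' : ∀ t, HasDerivAt x (x' t) t) (hy' : ∀ t, HasDerivAt y (y' t) t)
    (hx'' : ∀ t, HasDerivAt x' (x'' t) t) (hy'' : ∀ t, HasDerivAt y' (y'' t) t)
    (hpos : ∀ t, x t ^ 2 + y t ^ 2 ≠ 0)
    (hODEx : ∀ t, x'' t = - x t / (x t ^ 2 + y t ^ 2) ^ ((3:ℝ)/2))
    (hODEy : ∀ t, y'' t = - y t / (x t ^ 2 + y t ^ 2) ^ ((3:ℝ)/2))
    (horbit : ∀ t, a * x t + b * y t + c * Real.sqrt (x t ^ 2 + y t ^ 2) = 1) :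
    (∀ t, (x' t ^ 2 + y' t ^ 2) / 2 - 1 / Real.sqrt (x t ^ 2 + y t ^ 2)
        = (a ^ 2 + b ^ 2 - c ^ 2) / (2 * c)) ∧
    (∀ t, (x t * y' t - y t * x' t) ^ 2 = 1 / c) := by
  have hs : ∀ t, (0:ℝ) < x t ^ 2 + y t ^ 2 := fun t =>
    lt_of_le_of_ne (by positivity) (Ne.symm (hpos t))
  set r : ℝ → ℝ := fun t => Real.sqrt (x t ^ 2 + y t ^ 2) with hrdef
  have hrpos : ∀ t, 0 < r t := fun t => Real.sqrt_pos.mpr (hs t)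
  have hr2 : ∀ t, r t ^ 2 = x t ^ 2 + y t ^ 2 := fun t => Real.sq_sqrt (hs t).le
  have hr3 : ∀ t, (x t ^ 2 + y t ^ 2) ^ ((3:ℝ)/2) = r t ^ 3 := by
    intro t
    rw [← hr2 t, ← Real.rpow_natCast (r t) 2, ← Real.rpow_mul (hrpos t).le,
      show ((2:ℕ):ℝ)*((3:ℝ)/2) = ((3:ℕ):ℝ) by norm_num, Real.rpow_natCast]
  -- derivative of r
  have hrd : ∀ t, HasDerivAt r ((x t * x' t + y t * y' t) / r t) t := by
    intro t
    have h1 : HasDerivAt (fun t => x t ^ 2 + y t ^ 2) (2 * x t * x' t + 2 * y t * y' t) t := by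
      have : HasDerivAt (fun t => x t ^ 2 + y t ^ 2) _ t := ((hx' t).pow 2).add ((hy' t).pow 2)
      convert this using 1; push_cast; ring
    have h2 := h1.sqrt (hpos t)
    convert h2 using 1
    rw [hrdef]
    field_simp
  set ρ : ℝ → ℝ := fun t => (x t * x' t + y t * y' t) / r t with hρdef
  -- first derivative of orbit equation
  have e2 : ∀ t, a * x' t + b * y' t + c * ρ t = 0 := by
    intro t
    have hF : HasDerivAt (fun t => a * x t + b * y t + c * r t)
        (a * x' t + b * y' t + c * ρ t) t :=
      (((hx' t).const_mul a).add ((hy' t).const_mul b)).add ((hrd t).const_mul c)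
    have hfun : (fun t => a * x t + b * y t + c * r t) = fun _ => (1:ℝ) :=
      funext fun t => horbit t
    have hF0 : HasDerivAt (fun t => a * x t + b * y t + c * r t) 0 t := by
      rw [hfun]; exact hasDerivAt_const t 1
    exact hF.unique hF0
  -- derivative of ρ
  have hρd : ∀ t, HasDerivAt ρ
      (((x' t * x' t + x t * x'' t + (y' t * y' t + y t * y'' t)) * r t
        - (x t * x' t + y t * y' t) * ρ t) / r t ^ 2) t := by
    intro t
    have hnum : HasDerivAt (fun t => x t * x' t + y t * y' t)
        (x' t * x' t + x t * x'' t + (y' t * y' t + y t * y'' t)) t :=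
      ((hx' t).mul (hx'' t)).add ((hy' t).mul (hy'' t))
    exact hnum.div (hrd t) (hrpos t).ne'
  -- second derivative of orbit equation
  have e3 : ∀ t, a * x'' t + b * y'' t
      + c * (((x' t * x' t + x t * x'' t + (y' t * y' t + y t * y'' t)) * r t
        - (x t * x' t + y t * y' t) * ((x t * x' t + y t * y' t) / r t)) / r t ^ 2) = 0 := by
    intro t
    have hG : HasDerivAt (fun t => a * x' t + b * y' t + c * ρ t)
        (a * x'' t + b * y'' t
          + c * (((x' t * x' t + x t * x'' t + (y' t * y' t + y t * y'' t)) * r t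
            - (x t * x' t + y t * y' t) * ρ t) / r t ^ 2)) t :=
      (((hx'' t).const_mul a).add ((hy'' t).const_mul b)).add ((hρd t).const_mul c)
    have hfun : (fun t => a * x' t + b * y' t + c * ρ t) = fun _ => (0:ℝ) :=
      funext fun t => e2 t
    have hG0 : HasDerivAt (fun t => a * x' t + b * y' t + c * ρ t) 0 t := by
      rw [hfun]; exact hasDerivAt_const t 0
    exact hG.unique hG0
  -- pointwise algebra
  have key : ∀ t, ((x' t ^ 2 + y' t ^ 2)/2 - 1/(r t) = (a^2+b^2-c^2)/(2*c))
      ∧ (x t * y' t - y t * x' t)^2 = 1/c := by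
    intro t
    apply kepler_algebra a b c (x t) (y t) (x' t) (y' t) (r t) hc (hrpos t) (hr2 t)
        (horbit t)
    · have := e2 t
      rw [hρdef] at this
      exact this
    · have h := e3 t
      rw [hODEx t, hODEy t, hr3 t] at h
      convert h using 3
  exact ⟨fun t => (key t).1, fun t => (key t).2⟩
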